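/- For n > 3ℓ, every edge-coloring of K_n without a rainbow triangle contains a monochromatic star K_{1,ℓ}; hence S(n; K_{1,ℓ}, K_3) = ∅ for n ≥ 3ℓ+1. -/

import Mathlib

open SimpleGraph Finset

universe u v

variable {α : Type u} {β : Type v}

/-- The set of colors used on (non-loop) edges of `K_n` by an edge-coloring `c`. -/
def edgeColors {n : ℕ} (c : Sym2 (Fin n) → ℕ) : Finset ℕ :=
  (Finset.univ.filter fun e : Sym2 (Fin n) => ¬ e.IsDiag).image c

/-- `c` contains a monochromatic copy of `G`. -/
def HasMonoCopy {n : ℕ} (c : Sym2 (Fin n) → ℕ) (G : SimpleGraph α) : Prop :=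
  ∃ f : α ↪ Fin n, ∃ k : ℕ, ∀ u v : α, G.Adj u v → c s(f u, f v) = k

/-- `c` contains a rainbow (totally multicolored) copy of `H`. -/
def HasRainbowCopy {n : ℕ} (c : Sym2 (Fin n) → ℕ) (H : SimpleGraph β) : Prop :=
  ∃ f : β ↪ Fin n, ∀ u v u' v' : β, H.Adj u v → H.Adj u' v' →
    c s(f u, f v) = c s(f u', f v') → s(u, v) = s(u', v')

/-- A `(G,H)`-good coloring: no monochromatic `G` and no rainbow `H`. -/
def GoodColoring {n : ℕ} (c : Sym2 (Fin n) → ℕ) (G : SimpleGraph α) (H : SimpleGraph β) : Prop :=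
  ¬ HasMonoCopy c G ∧ ¬ HasRainbowCopy c H

/-- The mixed-Ramsey mixedSpectrum `S(n; G, H)`. -/
def mixedSpectrum (n : ℕ) (G : SimpleGraph α) (H : SimpleGraph β) : Set ℕ :=
  {k | ∃ c : Sym2 (Fin n) → ℕ, GoodColoring c G H ∧ (edgeColors c).card = k}

/-- `G` is a star: all edges share a common vertex. -/
def IsStar (G : SimpleGraph α) : Prop :=
  ∃ v : α, ∀ u w : α, G.Adj u w → u = v ∨ w = v

/-- `K_3 + e`: a triangle `0,1,2` with a pendant edge `0-3`. -/
def K3e : SimpleGraph (Fin 4) := fromEdgeSet {s(0,1), s(0,2), s(1,2), s(0,3)}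

/-- The 4-cycle `C_4`. -/
def C4g : SimpleGraph (Fin 4) := fromEdgeSet {s(0,1), s(1,2), s(2,3), s(3,0)}

/-- The matching `ℓK_2`. -/
def matchingGraph (ℓ : ℕ) : SimpleGraph (Fin ℓ × Fin 2) := fromRel (fun a b => a.1 = b.1)

/-- The star `K_{1,ℓ}`. -/
def starGraphK (ℓ : ℕ) : SimpleGraph (Fin (ℓ+1)) := fromRel (fun a _ => a = 0)

/-- The cycle `C_m` on `ZMod m`. -/
def cycGraph (m : ℕ) : SimpleGraph (ZMod m) := fromRel (fun a b => a = b + 1)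

lemma mono_of_star {n ℓ : ℕ} (c : Sym2 (Fin n) → ℕ) (x : Fin n) (k : ℕ)
    (hcard : ℓ ≤ (Finset.univ.filter fun z : Fin n => z ≠ x ∧ c s(x, z) = k).card) :
    HasMonoCopy c (starGraphK ℓ) := by
  obtain ⟨S, hSsub, hScard⟩ := Finset.exists_subset_card_eq hcard
  have hmem : ∀ y ∈ S, y ≠ x ∧ c s(x, y) = k := by
    intro y hy
    have := hSsub hy
    simpa using this
  set g : Fin ℓ → Fin n := fun i => (S.orderIsoOfFin hScard i : Fin n) with hg
  have hgS : ∀ i, g i ∈ S := fun i => (S.orderIsoOfFin hScard i).2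
  have hginj : Function.Injective g := by
    intro i j hij
    have := Subtype.ext hij (p := fun z => z ∈ S)
    exact (S.orderIsoOfFin hScard).injective (Subtype.ext hij)
  refine ⟨⟨Fin.cons x g, ?_⟩, k, ?_⟩
  · rw [Fin.cons_injective_iff]
    refine ⟨?_, hginj⟩
    rintro ⟨i, hi⟩
    exact (hmem _ (hgS i)).1 hi
  · intro a b hab
    rw [starGraphK, fromRel_adj] at hab
    obtain ⟨hne, h0⟩ := hab
    rcases h0 with h0 | h0
    · subst h0
      obtain ⟨j, rfl⟩ := Fin.eq_succ_of_ne_zero (Ne.symm hne)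
      simp only [Function.Embedding.coeFn_mk, Fin.cons_zero, Fin.cons_succ]
      exact (hmem _ (hgS j)).2
    · subst h0
      obtain ⟨j, rfl⟩ := Fin.eq_succ_of_ne_zero hne
      simp only [Function.Embedding.coeFn_mk, Fin.cons_zero, Fin.cons_succ]
      rw [Sym2.eq_swap]
      exact (hmem _ (hgS j)).2

lemma triple {n : ℕ} (c : Sym2 (Fin n) → ℕ)
    (hr : ¬ HasRainbowCopy c (completeGraph (Fin 3)))
    {a b d : Fin n} (hab : a ≠ b) (had : a ≠ d) (hbd : b ≠ d) :
    c s(a,b) = c s(a,d) ∨ c s(a,b) = c s(b,d) ∨ c s(a,d) = c s(b,d) := by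
  by_contra hcon
  push_neg at hcon
  obtain ⟨h1, h2, h3⟩ := hcon
  apply hr
  have hinj : Function.Injective ![a, b, d] := by
    intro i j hij
    fin_cases i <;> fin_cases j <;> simp_all
  refine ⟨⟨![a, b, d], hinj⟩, ?_⟩
  intro u v u' v' huv hu'v' hcol
  simp only [completeGraph, top_adj] at huv hu'v'
  have e1 : c s(b, a) = c s(a, b) := by rw [Sym2.eq_swap]
  have e2 : c s(d, a) = c s(a, d) := by rw [Sym2.eq_swap]
  have e3 : c s(d, b) = c s(b, d) := by rw [Sym2.eq_swap]
  fin_cases u <;> fin_cases v <;> fin_cases u' <;> fin_cases v' <;>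
    first
    | exact absurd rfl huv
    | exact absurd rfl hu'v'
    | ((try simp [e1, e2, e3] at hcol)
       first | decide | omega)

lemma key {n ℓ : ℕ} (h : 3 * ℓ < n) (c : Sym2 (Fin n) → ℕ)
    (hr : ¬ HasRainbowCopy c (completeGraph (Fin 3))) :
    HasMonoCopy c (starGraphK ℓ) := by
  have hn : 0 < n := lt_of_le_of_lt (Nat.zero_le _) h
  rcases Nat.eq_zero_or_pos ℓ with hℓ | hℓ
  · subst hℓ
    have hone : ∀ a b : Fin (0+1), a = b := by
      intro a b
      have ha := a.isLt
      have hb := b.isLt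
      exact Fin.ext (by omega)
    exact ⟨⟨fun _ => ⟨0, hn⟩, fun a b _ => hone a b⟩, 0,
      fun a b hab => absurd (hone a b) hab.ne⟩
  have hn4 : 4 ≤ n := by omega
  by_contra hmono
  have hstar : ∀ (x : Fin n) (k : ℕ),
      (univ.filter fun z : Fin n => z ≠ x ∧ c s(x,z) = k).card < ℓ := by
    intro x k
    by_contra hge
    exact hmono (mono_of_star c x k (le_of_not_gt hge))
  set v : Fin n := ⟨0, hn⟩ with hv
  set W : Finset (Fin n) := univ.erase v with hW
  have hWcard : W.card = n - 1 := by
    rw [hW, Finset.card_erase_of_mem (mem_univ v), Finset.card_univ, Fintype.card_fin]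
  set kk : Fin n → ℕ := fun y => c s(v, y) with hkk
  have hvW : v ∉ W := Finset.notMem_erase v univ
  have hWv : ∀ x ∈ W, x ≠ v := fun x hx => Finset.ne_of_mem_erase hx
  -- lower bound on T x
  have hlow : ∀ x ∈ W, n ≤ (W.filter fun y => y ≠ x ∧ kk y ≠ kk x).card + ℓ := by
    intro x hx
    have hsplit : (W.filter fun y => y ≠ x ∧ kk y ≠ kk x).card
        + (W.filter fun y => y ≠ x ∧ ¬ (kk y ≠ kk x)).card
        = (W.filter fun y => y ≠ x).card := by
      rw [← Finset.filter_filter, ← Finset.filter_filter]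
      exact Finset.card_filter_add_card_filter_not _
    have herase : (W.filter fun y => y ≠ x).card = n - 2 := by
      rw [Finset.filter_ne', Finset.card_erase_of_mem hx, hWcard]
      omega
    have hBsub : insert x (W.filter fun y => y ≠ x ∧ ¬ (kk y ≠ kk x))
        ⊆ univ.filter fun z : Fin n => z ≠ v ∧ c s(v, z) = kk x := by
      intro z hz
      rcases Finset.mem_insert.mp hz with rfl | hz
      · exact Finset.mem_filter.mpr ⟨mem_univ _, hWv _ hx, rfl⟩
      · obtain ⟨hzW, hzx, hzk⟩ := Finset.mem_filter.mp hz
        exact Finset.mem_filter.mpr ⟨mem_univ _, hWv _ hzW, not_not.mp hzk⟩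
    have hxnot : x ∉ (W.filter fun y => y ≠ x ∧ ¬ (kk y ≠ kk x)) := by
      simp
    have hB : (W.filter fun y => y ≠ x ∧ ¬ (kk y ≠ kk x)).card + 1 < ℓ := by
      calc (W.filter fun y => y ≠ x ∧ ¬ (kk y ≠ kk x)).card + 1
          = (insert x (W.filter fun y => y ≠ x ∧ ¬ (kk y ≠ kk x))).card := by
            rw [Finset.card_insert_of_notMem hxnot]
        _ ≤ _ := Finset.card_le_card hBsub
        _ < ℓ := hstar v (kk x)
    omega
  -- A1 bound
  have hA1 : ∀ x ∈ W,
      (W.filter fun y => y ≠ x ∧ kk y ≠ kk x ∧ c s(x,y) = kk x).card + 2 ≤ ℓ := by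
    intro x hx
    set A := W.filter fun y => y ≠ x ∧ kk y ≠ kk x ∧ c s(x,y) = kk x with hA
    have hvA : v ∉ A := fun hvin => hvW (Finset.mem_filter.mp hvin).1
    have hsub : insert v A ⊆ univ.filter fun z : Fin n => z ≠ x ∧ c s(x,z) = kk x := by
      intro z hz
      rcases Finset.mem_insert.mp hz with rfl | hz
      · refine Finset.mem_filter.mpr ⟨mem_univ _, (hWv _ hx).symm, ?_⟩
        rw [Sym2.eq_swap]
      · obtain ⟨hzW, hzx, _, hzc⟩ := Finset.mem_filter.mp hz
        exact Finset.mem_filter.mpr ⟨mem_univ _, hzx, hzc⟩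
    have : A.card + 1 < ℓ := by
      calc A.card + 1 = (insert v A).card := (Finset.card_insert_of_notMem hvA).symm
        _ ≤ _ := Finset.card_le_card hsub
        _ < ℓ := hstar x (kk x)
    omega
  -- A2' bound
  have hA2 : ∀ y ∈ W,
      (W.filter fun x => x ≠ y ∧ kk x ≠ kk y ∧ c s(x,y) = kk y).card + 2 ≤ ℓ := by
    intro y hy
    set A := W.filter fun x => x ≠ y ∧ kk x ≠ kk y ∧ c s(x,y) = kk y with hA
    have hvA : v ∉ A := fun hvin => hvW (Finset.mem_filter.mp hvin).1
    have hsub : insert v A ⊆ univ.filter fun z : Fin n => z ≠ y ∧ c s(y,z) = kk y := by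
      intro z hz
      rcases Finset.mem_insert.mp hz with rfl | hz
      · refine Finset.mem_filter.mpr ⟨mem_univ _, (hWv _ hy).symm, ?_⟩
        rw [Sym2.eq_swap]
      · obtain ⟨hzW, hzy, _, hzc⟩ := Finset.mem_filter.mp hz
        refine Finset.mem_filter.mpr ⟨mem_univ _, hzy, ?_⟩
        rwa [Sym2.eq_swap]
    have : A.card + 1 < ℓ := by
      calc A.card + 1 = (insert v A).card := (Finset.card_insert_of_notMem hvA).symm
        _ ≤ _ := Finset.card_le_card hsub
        _ < ℓ := hstar y (kk y)
    omega
  -- T x subset of union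
  have hTsub : ∀ x ∈ W, (W.filter fun y => y ≠ x ∧ kk y ≠ kk x).card
      ≤ (W.filter fun y => y ≠ x ∧ kk y ≠ kk x ∧ c s(x,y) = kk x).card
        + (W.filter fun y => y ≠ x ∧ kk y ≠ kk x ∧ c s(x,y) = kk y).card := by
    intro x hx
    have hsub : (W.filter fun y => y ≠ x ∧ kk y ≠ kk x)
        ⊆ (W.filter fun y => y ≠ x ∧ kk y ≠ kk x ∧ c s(x,y) = kk x)
          ∪ (W.filter fun y => y ≠ x ∧ kk y ≠ kk x ∧ c s(x,y) = kk y) := by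
      intro y hy
      obtain ⟨hyW, hyx, hyk⟩ := Finset.mem_filter.mp hy
      have htri := triple c hr (hWv _ hx).symm (hWv _ hyW).symm (Ne.symm hyx)
      -- a = v, b = x, d = y : c s(v,x) = c s(v,y) ∨ c s(v,x) = c s(x,y) ∨ c s(v,y) = c s(x,y)
      rcases htri with h' | h' | h'
      · exact absurd h'.symm hyk
      · exact Finset.mem_union_left _ (Finset.mem_filter.mpr ⟨hyW, hyx, hyk, h'.symm⟩)
      · exact Finset.mem_union_right _ (Finset.mem_filter.mpr ⟨hyW, hyx, hyk, h'.symm⟩)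
    exact le_trans (Finset.card_le_card hsub) (Finset.card_union_le _ _)
  -- swap the double sum
  have hswap : ∑ x ∈ W, (W.filter fun y => y ≠ x ∧ kk y ≠ kk x ∧ c s(x,y) = kk y).card
      = ∑ y ∈ W, (W.filter fun x => x ≠ y ∧ kk x ≠ kk y ∧ c s(x,y) = kk y).card := by
    simp only [Finset.card_filter]
    rw [Finset.sum_comm]
    refine Finset.sum_congr rfl fun y _ => Finset.sum_congr rfl fun x _ => ?_
    refine if_congr ⟨fun ⟨h1, h2, h3⟩ => ⟨h1.symm, h2.symm, h3⟩,
      fun ⟨h1, h2, h3⟩ => ⟨h1.symm, h2.symm, h3⟩⟩ rfl rfl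
  -- combine
  have S1 : W.card * n ≤ (∑ x ∈ W, (W.filter fun y => y ≠ x ∧ kk y ≠ kk x).card) + W.card * ℓ := by
    calc W.card * n = ∑ _x ∈ W, n := by rw [Finset.sum_const, smul_eq_mul]
      _ ≤ ∑ x ∈ W, ((W.filter fun y => y ≠ x ∧ kk y ≠ kk x).card + ℓ) :=
          Finset.sum_le_sum hlow
      _ = _ := by rw [Finset.sum_add_distrib, Finset.sum_const, smul_eq_mul]
  have S2 : (∑ x ∈ W, (W.filter fun y => y ≠ x ∧ kk y ≠ kk x ∧ c s(x,y) = kk x).card)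
      + W.card * 2 ≤ W.card * ℓ := by
    calc (∑ x ∈ W, (W.filter fun y => y ≠ x ∧ kk y ≠ kk x ∧ c s(x,y) = kk x).card) + W.card * 2
        = ∑ x ∈ W, ((W.filter fun y => y ≠ x ∧ kk y ≠ kk x ∧ c s(x,y) = kk x).card + 2) := by
          rw [Finset.sum_add_distrib, Finset.sum_const, smul_eq_mul]
      _ ≤ ∑ _x ∈ W, ℓ := Finset.sum_le_sum hA1
      _ = W.card * ℓ := by rw [Finset.sum_const, smul_eq_mul]
  have S3 : (∑ y ∈ W, (W.filter fun x => x ≠ y ∧ kk x ≠ kk y ∧ c s(x,y) = kk y).card)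
      + W.card * 2 ≤ W.card * ℓ := by
    calc (∑ y ∈ W, (W.filter fun x => x ≠ y ∧ kk x ≠ kk y ∧ c s(x,y) = kk y).card) + W.card * 2
        = ∑ y ∈ W, ((W.filter fun x => x ≠ y ∧ kk x ≠ kk y ∧ c s(x,y) = kk y).card + 2) := by
          rw [Finset.sum_add_distrib, Finset.sum_const, smul_eq_mul]
      _ ≤ ∑ _y ∈ W, ℓ := Finset.sum_le_sum hA2
      _ = W.card * ℓ := by rw [Finset.sum_const, smul_eq_mul]
  have ST : ∑ x ∈ W, (W.filter fun y => y ≠ x ∧ kk y ≠ kk x).card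
      ≤ (∑ x ∈ W, (W.filter fun y => y ≠ x ∧ kk y ≠ kk x ∧ c s(x,y) = kk x).card)
        + (∑ x ∈ W, (W.filter fun y => y ≠ x ∧ kk y ≠ kk x ∧ c s(x,y) = kk y).card) := by
    rw [← Finset.sum_add_distrib]
    exact Finset.sum_le_sum hTsub
  rw [hswap] at ST
  have hfinal : W.card * (n + 4) ≤ W.card * (3 * ℓ) := by nlinarith [S1, S2, S3, ST]
  have hWpos : 0 < W.card := by omega
  have : n + 4 ≤ 3 * ℓ := Nat.le_of_mul_le_mul_left hfinal hWpos
  omega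

/-- For `n > 3ℓ`, every coloring of `K_n` with no rainbow triangle has a
monochromatic `K_{1,ℓ}`; hence `S(n; K_{1,ℓ}, K_3) = ∅`. -/
theorem stmt_13 (n ℓ : ℕ) (h : 3 * ℓ < n) :
    (∀ c : Sym2 (Fin n) → ℕ, ¬ HasRainbowCopy c (completeGraph (Fin 3)) →
      HasMonoCopy c (starGraphK ℓ)) ∧
    mixedSpectrum n (starGraphK ℓ) (completeGraph (Fin 3)) = ∅ := by
  have key := fun c hr => key h c hr
  refine ⟨key, ?_⟩
  rw [Set.eq_empty_iff_forall_notMem]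
  rintro k ⟨c, ⟨hm, hr⟩, -⟩
  exact hm (key c hr)
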